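/- Let (M,g) be a Riemannian manifold of dimension n ≠ 2 whose Riemann tensor has quasi-constant curvature form R(X,Y,Z,W) = p(g(X,W)g(Y,Z) − g(Y,W)g(X,Z)) + q(g(X,W)t(Y)t(Z) − g(Y,W)t(X)t(Z) + g(Y,Z)t(W)t(X) − g(X,Z)t(W)t(Y)) for scalar functions p, q and a unit 1-form t. If a symmetric (0,2)-tensor b commutes with the Ricci operator, then b is Riemann compatible. -/
import Mathlib


open RealInnerProductSpace

/-!
Pointwise formalization of a quasi-constant curvature space (Chen–Yano): the tangent
space is modelled as an `n`-dimensional real inner product space (`n ≠ 2`), the unit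
1-form `t` is `t(X) = ⟪T, X⟫` for a unit vector `T`, the curvature `R X Y Z = R(X,Y)Z`
has the quasi-constant curvature form, and the Ricci operator `Ric` is the contraction
`⟪Ric X, Y⟫ = ∑ₐ ⟪R(X, eₐ) Y, eₐ⟫` with respect to an orthonormal basis `(eₐ)`.
-/

/-- In a quasi-constant curvature space of dimension `n ≠ 2`, any symmetric
`(0,2)`-tensor `b` commuting with the Ricci operator is Riemann compatible. -/
theorem riemann_compatible_quasi_constant_curvature
    {V : Type*} [NormedAddCommGroup V] [InnerProductSpace ℝ V] [FiniteDimensional ℝ V]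
    (hdim : Module.finrank ℝ V ≠ 2)
    (e : OrthonormalBasis (Fin (Module.finrank ℝ V)) ℝ V)
    (p q : ℝ) (T : V) (hT : ‖T‖ = 1)
    (R : V → V → V → V)
    (hR : ∀ X Y Z W : V,
      ⟪R X Y Z, W⟫ =
        p * (⟪X, W⟫ * ⟪Y, Z⟫ - ⟪Y, W⟫ * ⟪X, Z⟫)
          + q * (⟪X, W⟫ * ⟪T, Y⟫ * ⟪T, Z⟫ - ⟪Y, W⟫ * ⟪T, X⟫ * ⟪T, Z⟫
              + ⟪Y, Z⟫ * ⟪T, W⟫ * ⟪T, X⟫ - ⟪X, Z⟫ * ⟪T, W⟫ * ⟪T, Y⟫))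
    (Ric : V →ₗ[ℝ] V)
    (hRicdef : ∀ X Y : V, ⟪Ric X, Y⟫ = ∑ a, ⟪R X (e a) Y, e a⟫)
    (b : V →ₗ[ℝ] V →ₗ[ℝ] ℝ)
    (hbsymm : ∀ X Y : V, b X Y = b Y X)
    (hcomm : ∀ X Y : V, b (Ric X) Y = b X (Ric Y)) :
    ∀ X Y Z W : V, b (R Y Z W) X + b (R Z X W) Y + b (R X Y W) Z = 0 := by
  set n : ℝ := (Module.finrank ℝ V : ℝ) with hn
  have hTT : ⟪T, T⟫ = 1 := by rw [real_inner_self_eq_norm_sq, hT]; norm_num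
  -- vector form of the curvature
  have hRvec : ∀ X Y Z : V, R X Y Z =
      (p * ⟪Y, Z⟫ + q * (⟪T, Y⟫ * ⟪T, Z⟫)) • X
        + (-(p * ⟪X, Z⟫) - q * (⟪T, X⟫ * ⟪T, Z⟫)) • Y
        + (q * (⟪Y, Z⟫ * ⟪T, X⟫ - ⟪X, Z⟫ * ⟪T, Y⟫)) • T := by
    intro X Y Z
    apply ext_inner_right ℝ
    intro W
    rw [hR]
    simp only [inner_add_left, real_inner_smul_left]
    ring
  -- vector form of the Ricci operator
  have hRicvec : ∀ X : V, Ric X =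
      (((1 : ℝ) - n) * p - q) • X + (((2 : ℝ) - n) * q * ⟪T, X⟫) • T := by
    intro X
    apply ext_inner_right ℝ
    intro Y
    rw [hRicdef]
    have hcongr : ∀ a : Fin (Module.finrank ℝ V), ⟪R X (e a) Y, e a⟫ =
        p * (⟪X, e a⟫ * ⟪e a, Y⟫) - p * ⟪X, Y⟫
          + (q * ⟪T, Y⟫) * (⟪X, e a⟫ * ⟪e a, T⟫)
          - q * (⟪T, X⟫ * ⟪T, Y⟫)
          + (q * ⟪T, X⟫) * (⟪T, e a⟫ * ⟪e a, Y⟫)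
          - (q * ⟪X, Y⟫) * (⟪T, e a⟫ * ⟪e a, T⟫) := by
      intro a
      have h1 : ⟪e a, e a⟫ = 1 := by
        rw [real_inner_self_eq_norm_sq, e.orthonormal.1 a]; norm_num
      have h2 : ⟪T, e a⟫ = ⟪e a, T⟫ := real_inner_comm _ _
      rw [hR, h1, h2]; ring
    rw [Finset.sum_congr rfl fun a _ => hcongr a]
    simp only [Finset.sum_add_distrib, Finset.sum_sub_distrib, ← Finset.mul_sum,
      OrthonormalBasis.sum_inner_mul_inner, Finset.sum_const, Finset.card_univ,
      Fintype.card_fin, nsmul_eq_mul, inner_add_left, real_inner_smul_left, hTT,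
      real_inner_comm X T]
    ring
  -- the key consequence of the commutation hypothesis
  have hne : (2 : ℝ) - n ≠ 0 := by
    have : (n : ℝ) ≠ 2 := by
      rw [hn]; exact_mod_cast hdim
    exact sub_ne_zero_of_ne this.symm
  have h2 : ∀ Y : V, q * b T Y = q * ⟪T, Y⟫ * b T T := by
    intro Y
    apply mul_left_cancel₀ hne
    have h := hcomm T Y
    rw [hRicvec T, hRicvec Y] at h
    simp only [map_add, map_smul, LinearMap.add_apply, LinearMap.smul_apply,
      smul_eq_mul, hTT] at h
    linear_combination h
  have key : ∀ X Y : V, q * ⟪T, X⟫ * b T Y = q * ⟪T, Y⟫ * b T X := by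
    intro X Y
    linear_combination ⟪T, X⟫ * h2 Y - ⟪T, Y⟫ * h2 X
  intro X Y Z W
  rw [hRvec Y Z W, hRvec Z X W, hRvec X Y W]
  simp only [map_add, map_smul, LinearMap.add_apply, LinearMap.smul_apply, smul_eq_mul]
  linear_combination
    (p * ⟪Z, W⟫ + q * (⟪T, Z⟫ * ⟪T, W⟫)) * hbsymm Y X
      + (p * ⟪X, W⟫ + q * (⟪T, X⟫ * ⟪T, W⟫)) * hbsymm Z Y
      + (p * ⟪Y, W⟫ + q * (⟪T, Y⟫ * ⟪T, W⟫)) * hbsymm X Z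
      + ⟪Z, W⟫ * key Y X + ⟪X, W⟫ * key Z Y + ⟪Y, W⟫ * key X Z
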